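/- For (γ, θ) ∈ ℝ² let ψ(γ, θ) denote the quadruple of quaternions (i, e^{γk}·i, e^{θk}·i, e^{(θ−γ)k}·i). Then ψ(γ₁, θ₁) and ψ(γ₂, θ₂) are simultaneously conjugate by a unit quaternion if and only if there exist integers m, n with (γ₂, θ₂) = (γ₁ + 2πm, θ₁ + 2πn) or (γ₂, θ₂) = (−γ₁ + 2πm, −θ₁ + 2πn). (Hence ψ induces a homeomorphism of the pillowcase ℝ²/∼, where (γ,θ) ∼ (−γ,−θ) ∼ (γ+2πm, θ+2πn), with the traceless character variety of the four-punctured sphere.) -/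

import Mathlib

open Quaternion

noncomputable section

/-- The quaternion `i`. -/
def qi : ℍ[ℝ] := ⟨0, 1, 0, 0⟩

/-- The quaternion `k`. -/
def qk : ℍ[ℝ] := ⟨0, 0, 0, 1⟩

/-- The quaternionic exponential `e^{tQ} = cos t + (sin t) • Q` for a pure unit
quaternion `Q`. -/
def expQ (t : ℝ) (Q : ℍ[ℝ]) : ℍ[ℝ] := ((Real.cos t : ℝ) : ℍ[ℝ]) + (Real.sin t) • Q

/-- The quadruple `ψ(γ,θ) = (i, e^{γk}i, e^{θk}i, e^{(θ-γ)k}i)` of traceless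
quaternions. -/
def ψ (γ θ : ℝ) : ℍ[ℝ] × ℍ[ℝ] × ℍ[ℝ] × ℍ[ℝ] :=
  (qi, expQ γ qk * qi, expQ θ qk * qi, expQ (θ - γ) qk * qi)

/-- auxiliary: the vector `e^{tk}i = cos t · i + sin t · j`. -/
def qv (t : ℝ) : ℍ[ℝ] := ⟨0, Real.cos t, Real.sin t, 0⟩

lemma expQ_mul_qi (t : ℝ) : expQ t qk * qi = qv t := by
  ext <;> simp only [Quaternion.re_mul, Quaternion.imI_mul, Quaternion.imJ_mul, Quaternion.imK_mul, expQ, Quaternion.re_add, Quaternion.imI_add,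
    Quaternion.imJ_add, Quaternion.imK_add, Quaternion.re_smul, Quaternion.imI_smul,
    Quaternion.imJ_smul, Quaternion.imK_smul] <;>
    simp [expQ, qk, qi, qv, Quaternion.re_mul, Quaternion.imI_mul, Quaternion.imJ_mul,
      Quaternion.imK_mul]

lemma qv_zero : qv 0 = qi := by ext <;> simp [qv, qi]

lemma conj_iff {g : ℍ[ℝ]} (hg : g ≠ 0) (x y : ℍ[ℝ]) :
    g * x * g⁻¹ = y ↔ g * x = y * g := by
  rw [mul_inv_eq_iff_eq_mul₀ hg]

lemma exists_two_pi {x y : ℝ} (hc : Real.cos y = Real.cos x)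
    (hs : Real.sin y = Real.sin x) : ∃ m : ℤ, y = x + 2 * Real.pi * m := by
  obtain ⟨k, hk⟩ := Real.Angle.angle_eq_iff_two_pi_dvd_sub.mp (Real.Angle.cos_sin_inj hc hs)
  exact ⟨k, by linarith⟩

lemma qv_eqns {g : ℍ[ℝ]} (s t : ℝ) (h : g * qv s = qv t * g) (hj : g.imJ = 0)
    (hk : g.imK = 0) :
    g.imI * Real.cos s = g.imI * Real.cos t ∧ g.re * Real.cos s = g.re * Real.cos t ∧
    g.re * Real.sin s = g.re * Real.sin t ∧ g.imI * Real.sin s = -(g.imI * Real.sin t) := by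
  rw [Quaternion.ext_iff] at h
  simp only [Quaternion.re_mul, Quaternion.imI_mul, Quaternion.imJ_mul, Quaternion.imK_mul] at h
  simp [qv, Quaternion.re_mul, Quaternion.imI_mul, Quaternion.imJ_mul, Quaternion.imK_mul,
    hj, hk] at h
  refine ⟨by nlinarith [h.1], by nlinarith [h.2.1], by nlinarith [h.2.2.1],
    by nlinarith [h.2.2.2]⟩

/-- `ψ(γ₁,θ₁)` and `ψ(γ₂,θ₂)` are simultaneously conjugate by a unit quaternion if and
only if `(γ₂,θ₂) = ±(γ₁,θ₁) + (2πm, 2πn)` for some integers `m, n`; hence `ψ` induces a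
homeomorphism of the pillowcase with the traceless character variety of the
four-punctured sphere. -/
theorem psi_conjugate_iff_pillowcase (γ₁ θ₁ γ₂ θ₂ : ℝ) :
    (∃ g : ℍ[ℝ], ‖g‖ = 1 ∧
        g * (ψ γ₁ θ₁).1 * g⁻¹ = (ψ γ₂ θ₂).1 ∧
        g * (ψ γ₁ θ₁).2.1 * g⁻¹ = (ψ γ₂ θ₂).2.1 ∧
        g * (ψ γ₁ θ₁).2.2.1 * g⁻¹ = (ψ γ₂ θ₂).2.2.1 ∧
        g * (ψ γ₁ θ₁).2.2.2 * g⁻¹ = (ψ γ₂ θ₂).2.2.2) ↔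
      (∃ m n : ℤ,
        (γ₂ = γ₁ + 2 * Real.pi * m ∧ θ₂ = θ₁ + 2 * Real.pi * n) ∨
        (γ₂ = -γ₁ + 2 * Real.pi * m ∧ θ₂ = -θ₁ + 2 * Real.pi * n)) := by
  constructor
  · rintro ⟨g, hg1, h0, h1, h2, -⟩
    have hgne : g ≠ 0 := by
      intro h; rw [h, norm_zero] at hg1; norm_num at hg1
    simp only [ψ, expQ_mul_qi] at h0 h1 h2
    rw [conj_iff hgne] at h0 h1 h2
    -- from h0 : g * qi = qi * g, get imJ = imK = 0
    have hjk : g.imJ = 0 ∧ g.imK = 0 := by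
      rw [Quaternion.ext_iff] at h0
      simp only [Quaternion.re_mul, Quaternion.imI_mul, Quaternion.imJ_mul, Quaternion.imK_mul] at h0
      simp [qi, Quaternion.re_mul, Quaternion.imI_mul, Quaternion.imJ_mul,
        Quaternion.imK_mul] at h0
      constructor <;> nlinarith [h0.1, h0.2]
    obtain ⟨hj, hk⟩ := hjk
    have hns : g.re ^ 2 + g.imI ^ 2 = 1 := by
      have := Quaternion.normSq_eq_norm_mul_self g
      rw [hg1, Quaternion.normSq_def'] at this
      nlinarith [this]
    obtain ⟨e1γ, e2γ, e3γ, e4γ⟩ := qv_eqns γ₁ γ₂ h1 hj hk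
    obtain ⟨e1θ, e2θ, e3θ, e4θ⟩ := qv_eqns θ₁ θ₂ h2 hj hk
    by_cases hb : g.imI = 0
    · have ha : g.re ≠ 0 := by intro h; rw [h, hb] at hns; norm_num at hns
      have hcγ : Real.cos γ₂ = Real.cos γ₁ := (mul_left_cancel₀ ha e2γ).symm
      have hsγ : Real.sin γ₂ = Real.sin γ₁ := (mul_left_cancel₀ ha e3γ).symm
      have hcθ : Real.cos θ₂ = Real.cos θ₁ := (mul_left_cancel₀ ha e2θ).symm
      have hsθ : Real.sin θ₂ = Real.sin θ₁ := (mul_left_cancel₀ ha e3θ).symm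
      obtain ⟨m, hm⟩ := exists_two_pi hcγ hsγ
      obtain ⟨n, hn⟩ := exists_two_pi hcθ hsθ
      exact ⟨m, n, Or.inl ⟨hm, hn⟩⟩
    · have hcγ : Real.cos γ₂ = Real.cos (-γ₁) := by
        rw [Real.cos_neg]; exact (mul_left_cancel₀ hb e1γ).symm
      have hsγ : Real.sin γ₂ = Real.sin (-γ₁) := by
        rw [Real.sin_neg]
        have h' : g.imI * Real.sin γ₁ = g.imI * (-Real.sin γ₂) := by
          rw [mul_neg]; exact e4γ
        have := mul_left_cancel₀ hb h'
        linarith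
      have hcθ : Real.cos θ₂ = Real.cos (-θ₁) := by
        rw [Real.cos_neg]; exact (mul_left_cancel₀ hb e1θ).symm
      have hsθ : Real.sin θ₂ = Real.sin (-θ₁) := by
        rw [Real.sin_neg]
        have h' : g.imI * Real.sin θ₁ = g.imI * (-Real.sin θ₂) := by
          rw [mul_neg]; exact e4θ
        have := mul_left_cancel₀ hb h'
        linarith
      obtain ⟨m, hm⟩ := exists_two_pi hcγ hsγ
      obtain ⟨n, hn⟩ := exists_two_pi hcθ hsθ
      exact ⟨m, n, Or.inr ⟨hm, hn⟩⟩
  · rintro ⟨m, n, h | h⟩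
    · -- plus case: g = 1
      obtain ⟨hγ, hθ⟩ := h
      have hψ : ψ γ₂ θ₂ = ψ γ₁ θ₁ := by
        have key : ∀ (x : ℝ) (j : ℤ), qv (x + 2 * Real.pi * j) = qv x := by
          intro x j
          have hc := Real.cos_add_int_mul_two_pi x j
          have hs := Real.sin_add_int_mul_two_pi x j
          simp only [qv]
          rw [show x + 2 * Real.pi * j = x + j * (2 * Real.pi) by ring, hc, hs]
        simp only [ψ, expQ_mul_qi, hγ, hθ]
        rw [key γ₁ m, key θ₁ n,
          show θ₁ + 2 * Real.pi * n - (γ₁ + 2 * Real.pi * m)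
            = (θ₁ - γ₁) + 2 * Real.pi * (n - m : ℤ) by push_cast; ring,
          key (θ₁ - γ₁) (n - m)]
      refine ⟨1, by simp, ?_, ?_, ?_, ?_⟩ <;> rw [hψ] <;> simp
    · -- minus case: g = qi
      obtain ⟨hγ, hθ⟩ := h
      have hine : qi ≠ 0 := by
        intro h
        have : (qi).imI = 0 := by rw [h]; rfl
        simp [qi] at this
      have hni : ‖qi‖ = 1 := by
        have h1 : Quaternion.normSq qi = 1 := by rw [Quaternion.normSq_def']; simp [qi]
        have h2 := (Quaternion.normSq_eq_norm_mul_self qi).symm.trans h1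
        nlinarith [norm_nonneg qi]
      have minus : ∀ (x y : ℝ) (j : ℤ), y = -x + 2 * Real.pi * j →
          qi * qv x = qv y * qi := by
        intro x y j hy
        have hc : Real.cos y = Real.cos x := by
          rw [hy, show -x + 2 * Real.pi * j = -x + j * (2 * Real.pi) by ring,
            Real.cos_add_int_mul_two_pi, Real.cos_neg]
        have hs : Real.sin y = -Real.sin x := by
          rw [hy, show -x + 2 * Real.pi * j = -x + j * (2 * Real.pi) by ring,
            Real.sin_add_int_mul_two_pi, Real.sin_neg]
        ext <;> simp only [Quaternion.re_mul, Quaternion.imI_mul, Quaternion.imJ_mul, Quaternion.imK_mul] <;>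
          simp [qi, qv, Quaternion.re_mul, Quaternion.imI_mul, Quaternion.imJ_mul,
            Quaternion.imK_mul, hc, hs]
      refine ⟨qi, hni, ?_, ?_, ?_, ?_⟩ <;>
        simp only [ψ, expQ_mul_qi] <;> rw [conj_iff hine]
      · exact minus γ₁ γ₂ m hγ
      · exact minus θ₁ θ₂ n hθ
      · exact minus (θ₁ - γ₁) (θ₂ - γ₂) (n - m)
          (by rw [hγ, hθ]; push_cast; ring)
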